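/- Let F, H be real Hilbert/normed spaces with H a Hilbert space, T : F → H linear, V ⊆ H a closed subspace, L : F → ℝ^m linear, y ∈ range(L), and f̂ a minimizer over {f : L(f) = y} of ‖Tf − P_V(Tf)‖. Then ⟨T f̂ − P_V(T f̂), T u⟩ = 0 for every u ∈ ker(L). -/

import Mathlib

open scoped RealInnerProductSpace

lemma aux_min_inner {H : Type*} [NormedAddCommGroup H] [InnerProductSpace ℝ H]
    (x v : H) (h : ∀ t : ℝ, ‖x‖ ≤ ‖x + t • v‖) : ⟪x, v⟫ = 0 := by
  by_cases hv : v = 0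
  · simp [hv]
  · set c : ℝ := ⟪x, v⟫ with hc
    have hvn : (0:ℝ) < ‖v‖ ^ 2 := pow_pos (norm_pos_iff.mpr hv) 2
    set t : ℝ := -c / ‖v‖ ^ 2 with ht
    have h1 := h t
    have h2 : ‖x‖ ^ 2 ≤ ‖x + t • v‖ ^ 2 := by
      exact pow_le_pow_left₀ (norm_nonneg _) h1 2
    have h3 : ‖x + t • v‖ ^ 2 = ‖x‖ ^ 2 + 2 * (t * c) + t ^ 2 * ‖v‖ ^ 2 := by
      rw [@norm_add_sq_real, real_inner_smul_right, norm_smul]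
      simp [mul_pow]
      exact Or.inl hc.symm
    rw [h3] at h2
    have h4 : 0 ≤ 2 * (t * c) + t ^ 2 * ‖v‖ ^ 2 := by linarith
    have h5 : 2 * (t * c) + t ^ 2 * ‖v‖ ^ 2 = -(c ^ 2) / ‖v‖ ^ 2 := by
      rw [ht]; field_simp; ring
    rw [h5] at h4
    have : c ^ 2 ≤ 0 := by
      by_contra hcon
      push_neg at hcon
      have : -(c ^ 2) / ‖v‖ ^ 2 < 0 := div_neg_of_neg_of_pos (by linarith) hvn
      linarith
    have := pow_eq_zero_iff (n := 2) (by norm_num) |>.mp (le_antisymm this (sq_nonneg c))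
    exact this

theorem stmt_13 {F H : Type*} [NormedAddCommGroup F] [NormedSpace ℝ F]
    [NormedAddCommGroup H] [InnerProductSpace ℝ H]
    {m : ℕ} (T : F →ₗ[ℝ] H) (V : Submodule ℝ H) [CompleteSpace V]
    (L : F →ₗ[ℝ] (Fin m → ℝ)) (y : Fin m → ℝ) (hy : y ∈ LinearMap.range L)
    (fhat : F) (hdata : L fhat = y)
    (hmin : ∀ f : F, L f = y →
      ‖T fhat - (Submodule.orthogonalProjectionOnto V (T fhat) : H)‖ ≤
        ‖T f - (Submodule.orthogonalProjectionOnto V (T f) : H)‖) :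
    ∀ u ∈ LinearMap.ker L,
      ⟪T fhat - (Submodule.orthogonalProjectionOnto V (T fhat) : H), T u⟫ = 0 := by
  intro u hu
  set x : H := T fhat - (Submodule.orthogonalProjectionOnto V (T fhat) : H) with hx
  set v : H := T u - (Submodule.orthogonalProjectionOnto V (T u) : H) with hvdef
  have key : ∀ t : ℝ, ‖x‖ ≤ ‖x + t • v‖ := by
    intro t
    have hL : L (fhat + t • u) = y := by
      simp [map_add, map_smul, hdata, LinearMap.mem_ker.mp hu]
    have := hmin (fhat + t • u) hL
    have heq : T (fhat + t • u) - (Submodule.orthogonalProjectionOnto V (T (fhat + t • u)) : H)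
        = x + t • v := by
      rw [hx, hvdef]
      simp [map_add, map_smul]
      push_cast
      module
    rwa [heq] at this
  have h1 : ⟪x, v⟫ = 0 := aux_min_inner x v key
  have hxmem : x ∈ Vᗮ := Submodule.sub_starProjection_mem_orthogonal (K := V) (T fhat)
  have h2 : ⟪x, ((Submodule.orthogonalProjectionOnto V (T u)) : H)⟫ = 0 :=
    real_inner_comm x _ ▸ hxmem _ (Submodule.orthogonalProjectionOnto V (T u)).2
  have : ⟪x, T u⟫ = ⟪x, v⟫ + ⟪x, ((Submodule.orthogonalProjectionOnto V (T u)) : H)⟫ := by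
    rw [hvdef, ← inner_add_right]
    congr 1
    abel
  rw [this, h1, h2, add_zero]
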